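/- For every θ ∈ (0, 1) and every C₆ ≥ 0 there exists a constant C₇ = C₇(θ, C₆) < ∞ such that the following holds: let ρ ∈ [0, 1] and let f : [0, 1] → [0, ∞) be a continuous function satisfying f(t₂) ≤ exp(C₆·ρ·√(t₂ − t₁))·f(t₁) + C₆·√(t₂ − t₁) for all 0 ≤ t₁ ≤ t₂ < 1 with t₂ − t₁ ≤ θ·(1 − t₁). Then f(t₂) ≤ exp(C₇·ρ·√(t₂ − t₁))·f(t₁) + C₇·√(t₂ − t₁) for all 0 ≤ t₁ ≤ t₂ ≤ 1. -/

import Mathlib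

open Topology Filter

set_option maxHeartbeats 1600000


/-- For every `θ ∈ (0,1)` and `C₆ ≥ 0` there is `C₇ = C₇(θ, C₆) < ∞` such
that: if `ρ ∈ [0,1]` and `f : [0,1] → [0,∞)` is continuous and satisfies
`f(t₂) ≤ exp(C₆ ρ √(t₂−t₁)) f(t₁) + C₆ √(t₂−t₁)` for all `0 ≤ t₁ ≤ t₂ < 1` with
`t₂ − t₁ ≤ θ (1 − t₁)`, then `f(t₂) ≤ exp(C₇ ρ √(t₂−t₁)) f(t₁) + C₇ √(t₂−t₁)` for all
`0 ≤ t₁ ≤ t₂ ≤ 1`. -/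
theorem stmt_6 (θ : ℝ) (hθ₀ : 0 < θ) (hθ₁ : θ < 1) (C₆ : ℝ) (hC₆ : 0 ≤ C₆) :
    ∃ C₇ : ℝ, 0 < C₇ ∧
      ∀ (ρ : ℝ), 0 ≤ ρ → ρ ≤ 1 →
      ∀ f : ℝ → ℝ, ContinuousOn f (Set.Icc 0 1) →
        (∀ t ∈ Set.Icc (0:ℝ) 1, 0 ≤ f t) →
        (∀ t₁ t₂ : ℝ, 0 ≤ t₁ → t₁ ≤ t₂ → t₂ < 1 → t₂ - t₁ ≤ θ * (1 - t₁) →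
          f t₂ ≤ Real.exp (C₆ * ρ * Real.sqrt (t₂ - t₁)) * f t₁ +
            C₆ * Real.sqrt (t₂ - t₁)) →
        ∀ t₁ t₂ : ℝ, 0 ≤ t₁ → t₁ ≤ t₂ → t₂ ≤ 1 →
          f t₂ ≤ Real.exp (C₇ * ρ * Real.sqrt (t₂ - t₁)) * f t₁ +
            C₇ * Real.sqrt (t₂ - t₁) := by
  have hθ1' : (0:ℝ) < 1 - θ := by linarith
  set q : ℝ := Real.sqrt (1 - θ) with hqdef
  have hq0 : 0 < q := Real.sqrt_pos.2 hθ1'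
  have hq1 : q < 1 := by
    have : Real.sqrt (1 - θ) < Real.sqrt 1 := Real.sqrt_lt_sqrt (by linarith) (by linarith)
    simpa [hqdef] using this
  have h1q : (0:ℝ) < 1 - q := by linarith
  set A : ℝ := C₆ / (1 - q) with hAdef
  have hA0 : 0 ≤ A := div_nonneg hC₆ h1q.le
  have hAq : A * q + C₆ = A := by
    have h' : A * (1 - q) = C₆ := by rw [hAdef]; exact div_mul_cancel₀ _ h1q.ne'
    linear_combination -h'
  have hC₆A : C₆ ≤ A := by nlinarith
  set B : ℝ := Real.exp A * C₆ / (1 - q) with hBdef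
  have hB0 : 0 ≤ B := div_nonneg (mul_nonneg (Real.exp_pos _).le hC₆) h1q.le
  have hBq : B * q + Real.exp A * C₆ = B := by
    have h' : B * (1 - q) = Real.exp A * C₆ := by rw [hBdef]; exact div_mul_cancel₀ _ h1q.ne'
    linear_combination -h'
  have hC₆B : C₆ ≤ B := by
    have h1 : (1:ℝ) ≤ Real.exp A := Real.one_le_exp hA0
    nlinarith
  clear_value B
  clear hBdef
  clear_value A
  clear hAdef
  clear_value q
  refine ⟨A + B + 1, by positivity, ?_⟩
  intro ρ hρ0 hρ1 f hf hfnn hstep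
  -- The key induction: the bound with constants (A, B) holds on intervals of
  -- relative length `1 - (1-θ)^n`.
  have key : ∀ n : ℕ, ∀ t₁ t₂ : ℝ, 0 ≤ t₁ → t₁ ≤ t₂ → t₂ < 1 →
      t₂ - t₁ ≤ (1 - (1-θ)^n) * (1 - t₁) →
      f t₂ ≤ Real.exp (A * ρ * Real.sqrt (t₂ - t₁)) * f t₁ + B * Real.sqrt (t₂ - t₁) := by
    intro n
    induction n with
    | zero =>
      intro t₁ t₂ h0 h12 h21 hle
      have ht : t₂ = t₁ := by simp at hle; linarith
      subst ht
      simp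
    | succ n ih =>
      intro t₁ t₂ h0 h12 h21 hle
      have hs0 : 0 ≤ Real.sqrt (t₂ - t₁) := Real.sqrt_nonneg _
      have hft₁ : 0 ≤ f t₁ := hfnn t₁ ⟨h0, by linarith⟩
      by_cases hcase : t₂ - t₁ ≤ θ * (1 - t₁)
      · have h := hstep t₁ t₂ h0 h12 h21 hcase
        calc f t₂ ≤ Real.exp (C₆ * ρ * Real.sqrt (t₂ - t₁)) * f t₁
              + C₆ * Real.sqrt (t₂ - t₁) := h
          _ ≤ Real.exp (A * ρ * Real.sqrt (t₂ - t₁)) * f t₁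
              + B * Real.sqrt (t₂ - t₁) := by gcongr
      · push_neg at hcase
        obtain ⟨s, hsdef⟩ : ∃ s : ℝ, s = t₁ + θ * (1 - t₁) := ⟨_, rfl⟩
        have ht₁1 : t₁ < 1 := lt_of_le_of_lt h12 h21
        have hts : t₁ ≤ s := by nlinarith
        have hst₂ : s ≤ t₂ := by nlinarith
        have hs1 : s < 1 := by nlinarith
        have hp : (1-θ)^(n+1) = (1-θ)^n * (1-θ) := pow_succ _ _
        have hrw : (1 - (1-θ)^n) * (1 - s)
            = (1 - (1-θ)^(n+1)) * (1 - t₁) - θ * (1 - t₁) := by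
          rw [hsdef, hp]; ring
        have hih : t₂ - s ≤ (1 - (1-θ)^n) * (1 - s) := by
          rw [hrw]; linarith
        have h1 := hstep t₁ s h0 hts hs1 (by rw [hsdef]; ring_nf; exact le_refl _)
        have h2 := ih s t₂ (by linarith) hst₂ h21 hih
        have hfs : 0 ≤ f s := hfnn s ⟨by linarith, by linarith⟩
        -- square-root estimates
        have hs1le : Real.sqrt (s - t₁) ≤ Real.sqrt (t₂ - t₁) :=
          Real.sqrt_le_sqrt (by linarith)
        have hs2le : Real.sqrt (t₂ - s) ≤ q * Real.sqrt (t₂ - t₁) := by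
          have h' : t₂ - s ≤ (1 - θ) * (t₂ - t₁) := by nlinarith
          calc Real.sqrt (t₂ - s) ≤ Real.sqrt ((1 - θ) * (t₂ - t₁)) :=
                Real.sqrt_le_sqrt h'
            _ = q * Real.sqrt (t₂ - t₁) := by
                rw [Real.sqrt_mul hθ1'.le, hqdef]
        have hs2le1 : Real.sqrt (t₂ - s) ≤ 1 := by
          rw [show (1:ℝ) = Real.sqrt 1 by simp]
          exact Real.sqrt_le_sqrt (by linarith)
        have hexp1 : Real.exp (A * ρ * Real.sqrt (t₂ - s)) ≤ Real.exp A := by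
          apply Real.exp_le_exp.2
          have k1 : ρ * Real.sqrt (t₂ - s) ≤ 1 := by
            nlinarith [Real.sqrt_nonneg (t₂ - s)]
          have k2 : A * (ρ * Real.sqrt (t₂ - s)) ≤ A * 1 :=
            mul_le_mul_of_nonneg_left k1 hA0
          linarith [k2, (mul_assoc A ρ (Real.sqrt (t₂ - s))).symm]
        -- exponent estimate
        have e1a : A * ρ * Real.sqrt (t₂ - s) ≤ A * ρ * (q * Real.sqrt (t₂ - t₁)) :=
          mul_le_mul_of_nonneg_left hs2le (mul_nonneg hA0 hρ0)
        have e1b : C₆ * ρ * Real.sqrt (s - t₁) ≤ C₆ * ρ * Real.sqrt (t₂ - t₁) :=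
          mul_le_mul_of_nonneg_left hs1le (mul_nonneg hC₆ hρ0)
        have e1c : A * ρ * (q * Real.sqrt (t₂ - t₁)) + C₆ * ρ * Real.sqrt (t₂ - t₁)
            = (A * q + C₆) * ρ * Real.sqrt (t₂ - t₁) := by ring
        rw [hAq] at e1c
        have e1 : A * ρ * Real.sqrt (t₂ - s) + C₆ * ρ * Real.sqrt (s - t₁)
            ≤ A * ρ * Real.sqrt (t₂ - t₁) := by linarith
        have e3 : Real.exp (A * ρ * Real.sqrt (t₂ - s) + C₆ * ρ * Real.sqrt (s - t₁))
            ≤ Real.exp (A * ρ * Real.sqrt (t₂ - t₁)) := Real.exp_le_exp.2 e1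
        -- additive estimate
        have e2a : Real.exp (A * ρ * Real.sqrt (t₂ - s)) * (C₆ * Real.sqrt (s - t₁))
            ≤ Real.exp A * (C₆ * Real.sqrt (t₂ - t₁)) := by gcongr
        have e2b : B * Real.sqrt (t₂ - s) ≤ B * (q * Real.sqrt (t₂ - t₁)) :=
          mul_le_mul_of_nonneg_left hs2le hB0
        have e2c : B * (q * Real.sqrt (t₂ - t₁)) + Real.exp A * (C₆ * Real.sqrt (t₂ - t₁))
            = (B * q + Real.exp A * C₆) * Real.sqrt (t₂ - t₁) := by ring
        rw [hBq] at e2c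
        have e2 : Real.exp (A * ρ * Real.sqrt (t₂ - s)) * (C₆ * Real.sqrt (s - t₁))
            + B * Real.sqrt (t₂ - s) ≤ B * Real.sqrt (t₂ - t₁) := by linarith
        have e4 : Real.exp (A * ρ * Real.sqrt (t₂ - s) + C₆ * ρ * Real.sqrt (s - t₁)) * f t₁
            ≤ Real.exp (A * ρ * Real.sqrt (t₂ - t₁)) * f t₁ :=
          mul_le_mul_of_nonneg_right e3 hft₁
        calc f t₂ ≤ Real.exp (A * ρ * Real.sqrt (t₂ - s)) * f s
              + B * Real.sqrt (t₂ - s) := h2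
          _ ≤ Real.exp (A * ρ * Real.sqrt (t₂ - s)) *
              (Real.exp (C₆ * ρ * Real.sqrt (s - t₁)) * f t₁ + C₆ * Real.sqrt (s - t₁))
              + B * Real.sqrt (t₂ - s) := by gcongr
          _ = Real.exp (A * ρ * Real.sqrt (t₂ - s) + C₆ * ρ * Real.sqrt (s - t₁)) * f t₁
              + (Real.exp (A * ρ * Real.sqrt (t₂ - s)) * (C₆ * Real.sqrt (s - t₁))
              + B * Real.sqrt (t₂ - s)) := by rw [Real.exp_add]; ring
          _ ≤ Real.exp (A * ρ * Real.sqrt (t₂ - t₁)) * f t₁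
              + B * Real.sqrt (t₂ - t₁) := add_le_add e4 e2
  -- Extend to all `t₂ < 1`.
  have main : ∀ t₁ t₂ : ℝ, 0 ≤ t₁ → t₁ ≤ t₂ → t₂ < 1 →
      f t₂ ≤ Real.exp (A * ρ * Real.sqrt (t₂ - t₁)) * f t₁ + B * Real.sqrt (t₂ - t₁) := by
    intro t₁ t₂ h0 h12 h21
    have ht₁1 : t₁ < 1 := lt_of_le_of_lt h12 h21
    obtain ⟨n, hn⟩ := exists_pow_lt_of_lt_one
      (show (0:ℝ) < (1 - t₂) / (1 - t₁) from div_pos (by linarith) (by linarith))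
      (show 1 - θ < 1 by linarith)
    have hn' : (1-θ)^n * (1 - t₁) ≤ 1 - t₂ :=
      ((lt_div_iff₀ (by linarith : (0:ℝ) < 1 - t₁)).1 hn).le
    exact key n t₁ t₂ h0 h12 h21 (by nlinarith)
  -- Upgrade constants to C₇ = A + B + 1.
  have upgrade : ∀ t₁ t₂ : ℝ, 0 ≤ f t₁ → t₁ ≤ t₂ →
      f t₂ ≤ Real.exp (A * ρ * Real.sqrt (t₂ - t₁)) * f t₁ + B * Real.sqrt (t₂ - t₁) →
      f t₂ ≤ Real.exp ((A + B + 1) * ρ * Real.sqrt (t₂ - t₁)) * f t₁ +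
        (A + B + 1) * Real.sqrt (t₂ - t₁) := by
    intro t₁ t₂ hft h12 h
    have hs0 : 0 ≤ Real.sqrt (t₂ - t₁) := Real.sqrt_nonneg _
    calc f t₂ ≤ Real.exp (A * ρ * Real.sqrt (t₂ - t₁)) * f t₁
          + B * Real.sqrt (t₂ - t₁) := h
      _ ≤ Real.exp ((A + B + 1) * ρ * Real.sqrt (t₂ - t₁)) * f t₁ +
          (A + B + 1) * Real.sqrt (t₂ - t₁) := by
        have k1 : Real.exp (A * ρ * Real.sqrt (t₂ - t₁))
            ≤ Real.exp ((A + B + 1) * ρ * Real.sqrt (t₂ - t₁)) := by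
          apply Real.exp_le_exp.2
          nlinarith [mul_nonneg hρ0 hs0]
        have k2 := mul_le_mul_of_nonneg_right k1 hft
        have k3 : B * Real.sqrt (t₂ - t₁) ≤ (A + B + 1) * Real.sqrt (t₂ - t₁) := by
          nlinarith
        linarith
  intro t₁ t₂ h0 h12 h21
  rcases lt_or_eq_of_le h21 with h21' | h21'
  · exact upgrade t₁ t₂ (hfnn t₁ ⟨h0, by linarith⟩) h12 (main t₁ t₂ h0 h12 h21')
  · subst h21'
    rcases lt_or_eq_of_le h12 with h12' | h12'
    · -- limit argument: t₁ < 1 = t₂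
      refine upgrade t₁ 1 (hfnn t₁ ⟨h0, by linarith⟩) h12 ?_
      have hne : (𝓝[Set.Ico t₁ 1] (1:ℝ)).NeBot := right_nhdsWithin_Ico_neBot h12'
      have hmem : (1:ℝ) ∈ Set.Icc (0:ℝ) 1 := ⟨by norm_num, le_refl _⟩
      have h1 : Filter.Tendsto f (𝓝[Set.Ico t₁ 1] (1:ℝ)) (𝓝 (f 1)) :=
        (hf 1 hmem).mono (fun x hx => ⟨le_trans h0 hx.1, hx.2.le⟩)
      have hgc : Continuous (fun t : ℝ =>
          Real.exp (A * ρ * Real.sqrt (t - t₁)) * f t₁ + B * Real.sqrt (t - t₁)) := by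
        continuity
      have h2 : Filter.Tendsto (fun t : ℝ =>
          Real.exp (A * ρ * Real.sqrt (t - t₁)) * f t₁ + B * Real.sqrt (t - t₁))
          (𝓝[Set.Ico t₁ 1] (1:ℝ))
          (𝓝 (Real.exp (A * ρ * Real.sqrt (1 - t₁)) * f t₁ + B * Real.sqrt (1 - t₁))) :=
        (hgc.tendsto 1).mono_left nhdsWithin_le_nhds
      refine le_of_tendsto_of_tendsto h1 h2 ?_
      exact eventually_nhdsWithin_of_forall fun t ht => main t₁ t h0 ht.1 ht.2
    · rw [← h12']
      simp
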